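/- arXiv:1801.05381 — 7 statements merged into one kernel-verified Lean document; each statement's English description precedes it below -/
import Mathlib

section
/- For all d ≥ 2, applying the derivation ∂₁ entrywise to the vector w_d gives a vector congruent modulo 2 to A_{d−1} w_{d+1}; that is, every entry of ∂₁(w_d) − A_{d−1} w_{d+1} has all of its integer coefficients even. -/
/- ℌ = ℚ⟨x,y⟩ realized as the monoid algebra of the free monoid on two letters,
   where `false` plays the role of the letter x and `true` of the letter y. -/
noncomputable section

abbrev H : Type := MonoidAlgebra ℚ (FreeMonoid Bool)

/-- The letter x. -/
def X : H := MonoidAlgebra.single (FreeMonoid.of false) 1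

/-- The letter y. -/
def Y : H := MonoidAlgebra.single (FreeMonoid.of true) 1

/-- The `n`-th (0-indexed) monomial of degree `d` in xℌy, in lexicographic
order with x < y: it is x, followed by the big-endian binary expansion of `n`
of length `d - 2` (false = x, true = y), followed by y. -/
def wordList (d n : ℕ) : List Bool :=
  (false :: (List.range (d - 2)).map fun k => Nat.testBit n (d - 3 - k)) ++ [true]

def word (d n : ℕ) : FreeMonoid Bool := FreeMonoid.ofList (wordList d n)

/-- The vector `w_d` of all `2^(d-2)` monomials of degree `d` in xℌy, in
lexicographic order. -/
def wVec (d : ℕ) : Fin (2 ^ (d - 2)) → H := fun i => MonoidAlgebra.single (word d i) 1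

/-- `p ≡ 0 (mod 2)`: all (integer) coefficients of `p` are even. -/
def Even2 (p : H) : Prop := ∀ m : FreeMonoid Bool, ∃ k : ℤ, p.coeff m = 2 * k

/-- `Afun m i j` is the `(i,j)` entry (0-indexed) of the matrix `A_{m+1}`,
so `A_n = Afun (n-1)`.  `A_1 = (1 1)` and `A_n` is built from the block rows
`(A_{n-1} | E | 0)` and `(0 | E | A_{n-1})`. -/
def Afun : ℕ → ℕ → ℕ → ℤ
  | 0, i, j => if i = 0 ∧ (j = 0 ∨ j = 1) then 1 else 0
  | m + 1, i, j =>
    if i < 2 ^ m then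
      if j < 2 ^ (m + 1) then Afun m i j
      else if j < 2 ^ (m + 1) + 2 ^ m then (if j = i + 2 ^ (m + 1) then 1 else 0)
      else 0
    else
      if j < 2 ^ m then 0
      else if j < 2 ^ (m + 1) then (if j = i then 1 else 0)
      else Afun m (i - 2 ^ m) (j - 2 ^ (m + 1))

-- auxiliaries
def W (l : List Bool) : H := MonoidAlgebra.single (FreeMonoid.ofList l) 1

def ins (l : List Bool) (k : ℕ) : List Bool := l.take k ++ [false, true] ++ l.drop (k+1)

def bitsL (m i : ℕ) : List Bool := (List.range m).map fun k => Nat.testBit i (m - 1 - k)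

lemma bitsL_length (m i : ℕ) : (bitsL m i).length = m := by simp [bitsL]

lemma wordList_eq (m n : ℕ) : wordList (m+2) n = (false :: bitsL m n) ++ [true] := rfl

lemma bitsL_succ (m j : ℕ) : bitsL (m+1) j = Nat.testBit j m :: bitsL m j := by
  unfold bitsL
  rw [List.range_succ_eq_map, List.map_cons, List.map_map]
  simp only [Nat.add_sub_cancel, Nat.sub_zero]
  congr 1
  refine List.map_congr_left fun k _ => ?_
  simp [Function.comp, Nat.sub_sub, Nat.add_comm]

lemma testBit_add_pow_lt {j k m : ℕ} (hk : k < m) :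
    (j + 2^m).testBit k = j.testBit k := by
  rw [Nat.testBit_eq_decide_div_mod_eq, Nat.testBit_eq_decide_div_mod_eq]
  have h2 : 2^m = 2^k * (2 * 2^(m-k-1)) := by
    rw [← pow_succ' (2:ℕ), ← pow_add]
    congr 1
    omega
  rw [h2, Nat.add_mul_div_left _ _ (Nat.pow_pos (n := k) (by norm_num)), Nat.add_mul_mod_self_left]

lemma testBit_add_pow_self {j m : ℕ} (hj : j < 2^m) : (j + 2^m).testBit m = true := by
  rw [Nat.testBit_eq_decide_div_mod_eq]
  rw [Nat.add_div_right _ (Nat.pow_pos (n := m) (by norm_num)), Nat.div_eq_of_lt hj]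
  decide

lemma bitsL_lo {m j : ℕ} (hj : j < 2^m) : bitsL (m+1) j = false :: bitsL m j := by
  rw [bitsL_succ, Nat.testBit_eq_false_of_lt hj]

lemma bitsL_hi {m j : ℕ} (hj : j < 2^m) : bitsL (m+1) (j + 2^m) = true :: bitsL m j := by
  rw [bitsL_succ, testBit_add_pow_self hj]
  congr 1
  unfold bitsL
  refine List.map_congr_left fun k hk => ?_
  rw [List.mem_range] at hk
  exact testBit_add_pow_lt (by omega)

lemma W_append (a b : List Bool) : W (a ++ b) = W a * W b := by
  unfold W
  rw [MonoidAlgebra.single_mul_single, one_mul, FreeMonoid.ofList_append]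

lemma W_false : W [false] = X := rfl
lemma W_true : W [true] = Y := rfl

lemma ins_cons_zero (c : Bool) (t : List Bool) : ins (c :: t) 0 = [false, true] ++ t := rfl
lemma ins_cons_succ (c : Bool) (t : List Bool) (k : ℕ) :
    ins (c :: t) (k+1) = c :: ins t k := by simp [ins]

lemma Dword (D : H →ₗ[ℚ] H)
    (hleib : ∀ a b : H, D (a * b) = D a * b + a * D b)
    (hDx : D X = X * Y) (hDy : D Y = -(X * Y)) (l : List Bool) :
    D (W l) = ∑ k ∈ Finset.range l.length,
      (if l.getD k false then (-1:ℚ) else 1) • W (ins l k) := by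
  induction l with
  | nil =>
      have h : D 1 = 0 := by
        have h := hleib 1 1
        simp only [mul_one, one_mul] at h
        exact (right_eq_add.mp h)
      have hW : W [] = 1 := rfl
      simp [hW, h]
  | cons c t ih =>
      have hXY : W [false, true] = X * Y := W_append [false] [true]
      have hc : D (W [c]) = (if c then (-1:ℚ) else 1) • W [false, true] := by
        cases c
        · simp [W_false, hDx, hXY]
        · simp [W_true, hDy, hXY]
      have hsplit : W (c :: t) = W [c] * W t := W_append [c] t
      rw [hsplit, hleib, hc, ih, Finset.mul_sum]
      rw [List.length_cons, Finset.sum_range_succ']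
      simp only [List.getD_cons_succ, List.getD_cons_zero, ins_cons_succ, ins_cons_zero]
      conv_lhs => rw [add_comm]
      congr 1
      · refine Finset.sum_congr rfl fun k _ => ?_
        rw [mul_smul_comm, ← W_append]
        rfl
      · rw [smul_mul_assoc, ← W_append]
def S (l : List Bool) : H := ∑ k ∈ Finset.range l.length, W (ins l k)

lemma S_cons (c : Bool) (t : List Bool) :
    S (c :: t) = (∑ k ∈ Finset.range t.length, W (c :: ins t k)) + W ([false, true] ++ t) := by
  unfold S
  rw [List.length_cons, Finset.sum_range_succ']
  simp only [ins_cons_succ, ins_cons_zero]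

def phi : FreeMonoid Bool → FreeMonoid Bool := fun u =>
  FreeMonoid.ofList (match FreeMonoid.toList u with
    | [] => [true]
    | c :: t => c :: true :: t)

def Phi : H →ₗ[ℚ] H := MonoidAlgebra.mapDomainLinearMap ℚ ℚ phi

lemma Phi_W (c : Bool) (u : List Bool) : Phi (W (c :: u)) = W (c :: true :: u) := by
  show MonoidAlgebra.mapDomainLinearMap ℚ ℚ phi (MonoidAlgebra.single (FreeMonoid.ofList (c :: u)) 1) = _
  rw [MonoidAlgebra.mapDomainLinearMap_single]
  rfl

lemma Afun_lo_left {m i j : ℕ} (hi : i < 2^m) (hj : j < 2^(m+1)) :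
    Afun (m+1) i j = Afun m i j := by
  simp only [Afun]
  split_ifs <;> first | rfl | omega

lemma Afun_lo_right {m i j : ℕ} (hi : i < 2^m) (hj : j < 2^(m+1)) :
    Afun (m+1) i (2^(m+1)+j) = if j = i then 1 else 0 := by
  simp only [Afun]
  split_ifs <;> first | rfl | omega

lemma Afun_hi_left {m i j : ℕ} (hi : 2^m ≤ i) (hj : j < 2^(m+1)) :
    Afun (m+1) i j = if j = i then 1 else 0 := by
  simp only [Afun]
  split_ifs <;> first | rfl | omega

lemma Afun_hi_right {m i j : ℕ} (hi : 2^m ≤ i) (hj : j < 2^(m+1)) :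
    Afun (m+1) i (2^(m+1)+j) = Afun m (i - 2^m) j := by
  simp only [Afun]
  split_ifs <;> first | rfl | omega | (congr 1; omega)
lemma pow_succ_lt {m i : ℕ} (h : i < 2^m) : i < 2^(m+1) :=
  lt_of_lt_of_le h (Nat.pow_le_pow_right (by norm_num) (Nat.le_succ m))

lemma wl_shift {m j : ℕ} (hj : j < 2^(m+1)) :
    (false :: bitsL (m+1+1) (2^(m+1)+j)) ++ [true]
      = (false :: true :: bitsL (m+1) j) ++ [true] := by
  rw [show 2^(m+1)+j = j+2^(m+1) from Nat.add_comm _ _, bitsL_hi hj]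

lemma key (m : ℕ) : ∀ i : ℕ, i < 2^m →
    S ((false :: bitsL m i) ++ [true]) =
    ∑ j ∈ Finset.range (2^(m+1)), ((Afun m i j : ℚ)) • W ((false :: bitsL (m+1) j) ++ [true]) := by
  induction m with
  | zero =>
      intro i hi
      interval_cases i
      have hb : bitsL 0 0 = [] := rfl
      have hb0 : bitsL 1 0 = [false] := by
        simp [bitsL, List.range_succ, Nat.testBit]
      have hb1 : bitsL 1 1 = [true] := by
        simp [bitsL, List.range_succ, Nat.testBit]
      rw [hb]
      show S [false, true] = _
      rw [show (2:ℕ)^(0+1) = 2 from rfl]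
      rw [Finset.sum_range_succ, Finset.sum_range_one, hb0, hb1]
      unfold S
      rw [show ([false, true] : List Bool).length = 2 from rfl,
        Finset.sum_range_succ, Finset.sum_range_one]
      have e0 : ins [false, true] 0 = [false, true, true] := rfl
      have e1 : ins [false, true] 1 = [false, false, true] := rfl
      rw [e0, e1]
      have a0 : ((Afun 0 0 0 : ℤ) : ℚ) = 1 := by norm_num [Afun]
      have a1 : ((Afun 0 0 1 : ℤ) : ℚ) = 1 := by norm_num [Afun]
      rw [a0, a1, one_smul, one_smul, add_comm]
      rfl
  | succ m ih =>
      intro i hi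
      rcases lt_or_ge i (2^m) with h | h
      · -- low case : first block row (A | E | 0)
        have hi2 : i < 2^(m+1) := pow_succ_lt h
        set t : List Bool := (false :: bitsL m i) ++ [true] with ht
        have hl : (false :: bitsL (m+1) i) ++ [true] = false :: t := by
          rw [bitsL_lo h]; rfl
        rw [hl, S_cons]
        have h1 : (∑ k ∈ Finset.range t.length, W (false :: ins t k)) = W [false] * S t := by
          rw [S, Finset.mul_sum]
          exact Finset.sum_congr rfl fun k _ => by rw [← W_append]; rfl
        rw [h1, ih i h, Finset.mul_sum]
        rw [show (2:ℕ)^(m+1+1) = 2^(m+1) + 2^(m+1) from by ring, Finset.sum_range_add]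
        congr 1
        · refine Finset.sum_congr rfl fun j hj => ?_
          rw [Finset.mem_range] at hj
          rw [Afun_lo_left h hj, mul_smul_comm]
          congr 1
          rw [bitsL_lo hj, ← W_append]
          rfl
        · have h2 : ∀ j ∈ Finset.range (2^(m+1)),
              ((Afun (m+1) i (2^(m+1)+j) : ℚ)) • W ((false :: bitsL (m+1+1) (2^(m+1)+j)) ++ [true])
              = if j = i then W ((false :: bitsL (m+1+1) (2^(m+1)+j)) ++ [true]) else 0 := by
            intro j hj
            rw [Finset.mem_range] at hj
            rw [Afun_lo_right h hj]
            split_ifs <;> simp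
          rw [Finset.sum_congr rfl h2, Finset.sum_ite_eq' (Finset.range (2^(m+1)))]
          rw [if_pos (Finset.mem_range.mpr hi2), wl_shift hi2, bitsL_lo h]
          rfl
      · -- high case : second block row (0 | E | A)
        have hi' : i - 2^m < 2^m := by omega
        have e1 : bitsL (m+1) i = true :: bitsL m (i - 2^m) := by
          have := bitsL_hi hi'
          rwa [show i - 2^m + 2^m = i from by omega] at this
        set t : List Bool := bitsL m (i - 2^m) ++ [true] with ht
        have hl : (false :: bitsL (m+1) i) ++ [true] = false :: true :: t := by
          rw [e1]; rfl
        rw [hl, S_cons]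
        rw [show (true :: t).length = t.length + 1 from rfl, Finset.sum_range_succ']
        simp only [ins_cons_succ, ins_cons_zero]
        -- now LHS = (∑ k, W (false :: true :: ins t k) + W (false :: [false,true] ++ t))
        --            + W ([false,true] ++ (true :: t))
        have hPhi : Phi (S (false :: t)) =
            (∑ k ∈ Finset.range t.length, W (false :: true :: ins t k))
              + W (false :: true :: true :: t) := by
          rw [S_cons, map_add, map_sum]
          congr 1
          · exact Finset.sum_congr rfl fun k _ => Phi_W false (ins t k)
          · exact Phi_W false (true :: t)
        have lhs_eq : (∑ k ∈ Finset.range t.length, W (false :: true :: ins t k))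
              + W (false :: ([false, true] ++ t)) + W ([false, true] ++ (true :: t))
            = Phi (S (false :: t)) + W (false :: false :: true :: t) := by
          rw [hPhi]
          show _ + W (false :: false :: true :: t) + W (false :: true :: true :: t) = _
          abel
        rw [lhs_eq]
        have hS : S (false :: t) = ∑ j ∈ Finset.range (2^(m+1)),
            ((Afun m (i - 2^m) j : ℚ)) • W ((false :: bitsL (m+1) j) ++ [true]) := ih _ hi'
        rw [hS, map_sum]
        rw [show (2:ℕ)^(m+1+1) = 2^(m+1) + 2^(m+1) from by ring, Finset.sum_range_add]
        rw [add_comm]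
        congr 1
        · -- identity block: ∑ over first half = W (word i)
          have h2 : ∀ j ∈ Finset.range (2^(m+1)),
              ((Afun (m+1) i j : ℚ)) • W ((false :: bitsL (m+1+1) j) ++ [true])
              = if j = i then W ((false :: bitsL (m+1+1) j) ++ [true]) else 0 := by
            intro j hj
            rw [Finset.mem_range] at hj
            rw [Afun_hi_left h hj]
            split_ifs <;> simp
          rw [Finset.sum_congr rfl h2, Finset.sum_ite_eq' (Finset.range (2^(m+1)))]
          rw [if_pos (Finset.mem_range.mpr hi), bitsL_lo hi, e1]
          rfl
        · -- A block
          refine Finset.sum_congr rfl fun j hj => ?_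
          rw [Finset.mem_range] at hj
          rw [Afun_hi_right h hj, map_smul, wl_shift hj]
          congr 1
          exact Phi_W false (bitsL (m+1) j ++ [true])
lemma even2_zero : Even2 0 := fun w => ⟨0, by simp⟩

lemma even2_add {p q : H} (hp : Even2 p) (hq : Even2 q) : Even2 (p + q) := by
  intro w
  obtain ⟨a, ha⟩ := hp w
  obtain ⟨b, hb⟩ := hq w
  refine ⟨a + b, ?_⟩
  show (p + q).coeff w = _
  rw [MonoidAlgebra.coeff_add, Finsupp.add_apply, ha, hb]
  push_cast
  ring

lemma even2_smulW (c : ℚ) (z : ℤ) (hz : c = 2 * z) (u : List Bool) : Even2 (c • W u) := by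
  intro w
  classical
  refine ⟨if FreeMonoid.ofList u = w then z else 0, ?_⟩
  show (c • W u).coeff w = _
  unfold W
  rw [MonoidAlgebra.coeff_smul_apply, MonoidAlgebra.coeff_single_apply]
  split_ifs <;> simp [hz] <;> ring

/-- Let `D = ∂₁` be the (unique) derivation of ℌ with
`∂₁(x) = xy` and `∂₁(y) = -xy`.  For all `d ≥ 2`, applying `∂₁` entrywise to
the vector `w_d` gives a vector congruent mod 2 to `A_{d-1} w_{d+1}`:
every entry of `∂₁(w_d) - A_{d-1} w_{d+1}` has all integer coefficients even. -/
theorem statement0 (D : H →ₗ[ℚ] H)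
    (hleib : ∀ a b : H, D (a * b) = D a * b + a * D b)
    (hDx : D X = X * Y) (hDy : D Y = -(X * Y))
    (d : ℕ) (hd : 2 ≤ d) (i : Fin (2 ^ (d - 2))) :
    Even2 (D (wVec d i) -
      ∑ j : Fin (2 ^ (d - 1)), ((Afun (d - 2) (i : ℕ) (j : ℕ) : ℚ)) • wVec (d + 1) j) := by
  obtain ⟨m, rfl⟩ : ∃ m, d = m + 2 := ⟨d - 2, by omega⟩
  have hi : (i : ℕ) < 2^m := i.isLt
  set l : List Bool := (false :: bitsL m (i : ℕ)) ++ [true] with hldef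
  have hw : wVec (m+2) i = W l := rfl
  have hlen : l.length = m + 2 := by simp [hldef, bitsL_length]
  have hsum : (∑ j : Fin (2 ^ (m + 2 - 1)), ((Afun (m + 2 - 2) (i : ℕ) (j : ℕ) : ℚ)) • wVec (m + 2 + 1) j)
      = ∑ j ∈ Finset.range (2^(m+1)),
          ((Afun m (i : ℕ) j : ℚ)) • W ((false :: bitsL (m+1) j) ++ [true]) := by
    exact Fin.sum_univ_eq_sum_range
      (fun n => ((Afun m (i : ℕ) n : ℚ)) • W ((false :: bitsL (m+1) n) ++ [true])) (2^(m+1))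
  have hE : D (wVec (m+2) i) -
      (∑ j : Fin (2 ^ (m + 2 - 1)), ((Afun (m + 2 - 2) (i : ℕ) (j : ℕ) : ℚ)) • wVec (m + 2 + 1) j)
      = ∑ k ∈ Finset.range (m+2),
          ((if l.getD k false then (-1:ℚ) else 1) - 1) • W (ins l k) := by
    rw [hsum, ← key m (i : ℕ) hi, hw, Dword D hleib hDx hDy, S, hlen,
      ← Finset.sum_sub_distrib]
    exact Finset.sum_congr rfl fun k _ => by rw [sub_smul, one_smul]
  rw [hE]
  refine Finset.sum_induction _ Even2 (fun a b => even2_add) even2_zero fun k _ => ?_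
  refine even2_smulW _ (if l.getD k false then -1 else 0) ?_ _
  split_ifs <;> norm_num


end
end

section
/- For all d ≥ 2 the determinant of the square integer matrix A_{d−1} ℰ_{d−1}^{(2)} of size 2^{d−2} is odd: det(A_{d−1} ℰ_{d−1}^{(2)}) ≡ 1 (mod 2). -/
/-- The `2^(n-1) × 2^n` integer matrix `A_n` (for `n ≥ 1`). -/
def Amat (n : ℕ) : Matrix (Fin (2 ^ (n - 1))) (Fin (2 ^ n)) ℤ :=
  Matrix.of fun i j => Afun (n - 1) (i : ℕ) (j : ℕ)

/-- The `2^d × 2^(d-1)` integer matrix `ℰ_d^{(2)}`, with entries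
`1` at `(i,j) = (2j, j)` in 0-indexed terms (i.e. `i = 2j` 1-indexed) and `0`
elsewhere. -/
def E2mat (d : ℕ) : Matrix (Fin (2 ^ d)) (Fin (2 ^ (d - 1))) ℤ :=
  Matrix.of fun i j => if (i : ℕ) = 2 * (j : ℕ) + 1 then 1 else 0

lemma L1 : ∀ (m i j : ℕ), 2*i < 2^m → 2*j+1 < 2^(m+1) →
    Afun m (2*i) (2*j+1) = if j = 2*i then 1 else 0 := by
  intro m
  induction m with
  | zero =>
    intro i j hi hj
    norm_num at hi hj
    have : i = 0 := by omega
    have : j = 0 := by omega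
    subst_vars
    norm_num [Afun]
  | succ m ih =>
    intro i j hi hj
    rw [Afun]
    by_cases h1 : 2*i < 2^m
    · rw [if_pos h1]
      by_cases h2 : 2*j+1 < 2^(m+1)
      · rw [if_pos h2]; exact ih i j h1 h2
      · rw [if_neg h2]
        have hpos : 0 < 2^m := Nat.pow_pos (by norm_num)
        have hje : ¬ (j = 2*i) := by
          have : 2^(m+1) = 2*2^m := by ring
          omega
        by_cases h3 : 2*j+1 < 2^(m+1) + 2^m
        · rw [if_pos h3, if_neg, if_neg hje]
          have : 2^(m+1) = 2*2^m := by ring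
          omega
        · rw [if_neg h3, if_neg hje]
    · rw [if_neg h1]
      have hpos : 0 < 2^m := Nat.pow_pos (by norm_num)
      have hm : m ≠ 0 := by
        intro h; subst h; simp at h1 hi; omega
      obtain ⟨m', rfl⟩ := Nat.exists_eq_succ_of_ne_zero hm
      have hp2 : (2:ℕ)^(m'+1) = 2*2^m' := by ring
      have hp3 : (2:ℕ)^(m'+1+1) = 4*2^m' := by ring
      by_cases h2 : 2*j+1 < 2^(m'+1)
      · rw [if_pos h2, if_neg (by omega : ¬ j = 2*i)]
      · rw [if_neg h2]
        by_cases h3 : 2*j+1 < 2^(m'+1+1)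
        · rw [if_pos h3, if_neg (by omega : ¬ 2*j+1 = 2*i), if_neg (by omega : ¬ j = 2*i)]
        · rw [if_neg h3]
          have e1 : 2*i - 2^(m'+1) = 2*(i - 2^m') := by omega
          have e2 : 2*j+1 - 2^(m'+1+1) = 2*(j - 2^(m'+1))+1 := by omega
          rw [e1, e2, ih (i - 2^m') (j - 2^(m'+1)) (by omega) (by omega)]
          have : (j - 2^(m'+1) = 2*(i-2^m')) ↔ (j = 2*i) := by omega
          simp only [this]

lemma L2 : ∀ (m k l : ℕ), k < 2^m → l < 2^m →
    Afun (m+1) (2*k+1) (4*l+3) = Afun m k (2*l+1) := by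
  intro m
  induction m with
  | zero =>
    intro k l hk hl
    norm_num at hk hl
    subst_vars
    norm_num [Afun]
  | succ m ih =>
    intro k l hk hl
    have hpos : 0 < 2^m := Nat.pow_pos (by norm_num)
    have hp2 : (2:ℕ)^(m+1) = 2*2^m := by ring
    have hp3 : (2:ℕ)^(m+1+1) = 4*2^m := by ring
    conv_lhs => rw [Afun]
    conv_rhs => rw [Afun]
    by_cases h1 : 2*k+1 < 2^(m+1)
    · rw [if_pos h1, if_pos (by omega : k < 2^m)]
      by_cases h2 : 4*l+3 < 2^(m+1+1)
      · rw [if_pos h2, if_pos (by omega : 2*l+1 < 2^(m+1))]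
        exact ih k l (by omega) (by omega)
      · rw [if_neg h2, if_neg (by omega : ¬ 2*l+1 < 2^(m+1))]
        by_cases h3 : 4*l+3 < 2^(m+1+1) + 2^(m+1)
        · rw [if_pos h3, if_pos (by omega : 2*l+1 < 2^(m+1) + 2^m)]
          have : (4*l+3 = 2*k+1 + 2^(m+1+1)) ↔ (2*l+1 = k + 2^(m+1)) := by omega
          simp only [this]
        · rw [if_neg h3, if_neg (by omega : ¬ 2*l+1 < 2^(m+1) + 2^m)]
    · rw [if_neg h1, if_neg (by omega : ¬ k < 2^m)]
      by_cases h2 : 4*l+3 < 2^(m+1)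
      · rw [if_pos h2, if_pos (by omega : 2*l+1 < 2^m)]
      · rw [if_neg h2, if_neg (by omega : ¬ 2*l+1 < 2^m)]
        by_cases h3 : 4*l+3 < 2^(m+1+1)
        · rw [if_pos h3, if_pos (by omega : 2*l+1 < 2^(m+1))]
          have : (4*l+3 = 2*k+1) ↔ (2*l+1 = k) := by omega
          simp only [this]
        · rw [if_neg h3, if_neg (by omega : ¬ 2*l+1 < 2^(m+1))]
          have e1 : 2*k+1 - 2^(m+1) = 2*(k - 2^m)+1 := by omega
          have e2 : 4*l+3 - 2^(m+1+1) = 4*(l - 2^m)+3 := by omega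
          have e3 : 2*l+1 - 2^(m+1) = 2*(l - 2^m)+1 := by omega
          rw [e1, e2, e3, ih (k - 2^m) (l - 2^m) (by omega) (by omega)]

def evenOddEquiv (n : ℕ) : (Fin n ⊕ Fin n) ≃ Fin (2*n) where
  toFun x := match x with
    | Sum.inl k => ⟨2*k.val, by have := k.2; omega⟩
    | Sum.inr k => ⟨2*k.val+1, by have := k.2; omega⟩
  invFun j := if (j:ℕ) % 2 = 0 then Sum.inl ⟨(j:ℕ)/2, by have := j.2; omega⟩
    else Sum.inr ⟨(j:ℕ)/2, by have := j.2; omega⟩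
  left_inv := by
    rintro (k | k)
    · show (if (2*k.val) % 2 = 0 then _ else _) = _
      rw [if_pos (by omega)]
      exact congrArg Sum.inl (Fin.ext (by show 2*k.val/2 = k.val; omega))
    · show (if (2*k.val+1) % 2 = 0 then _ else _) = _
      rw [if_neg (by omega)]
      exact congrArg Sum.inr (Fin.ext (by show (2*k.val+1)/2 = k.val; omega))
  right_inv := by
    intro j
    dsimp only
    by_cases h : (j:ℕ) % 2 = 0
    · rw [if_pos h]
      exact Fin.ext (by show 2*((j:ℕ)/2) = (j:ℕ); omega)
    · rw [if_neg h]
      exact Fin.ext (by show 2*((j:ℕ)/2)+1 = (j:ℕ); omega)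

def eeq (m : ℕ) : (Fin (2^m) ⊕ Fin (2^m)) ≃ Fin (2^(m+1)) :=
  (evenOddEquiv (2^m)).trans (finCongr (by ring))

def Cmat (m : ℕ) : Matrix (Fin (2^m)) (Fin (2^m)) (ZMod 2) :=
  Matrix.of fun i j => ((Afun m (i:ℕ) (2*(j:ℕ)+1) : ℤ) : ZMod 2)

lemma detC : ∀ m, (Cmat m).det = 1 := by
  intro m
  induction m with
  | zero =>
    haveI : Unique (Fin (2^0)) := ⟨⟨⟨0, by norm_num⟩⟩, fun a => Fin.ext (by omega)⟩
    rw [Matrix.det_unique]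
    simp only [Cmat, Matrix.of_apply]
    norm_num [Afun, show ((default : Fin (2^0)):ℕ) = 0 from rfl]
  | succ m ih =>
    rw [← Matrix.det_submatrix_equiv_self (eeq m) (Cmat (m+1))]
    have he1 : ∀ k : Fin (2^m), ((eeq m (Sum.inl k) : ℕ)) = 2*(k:ℕ) := fun k => rfl
    have he2 : ∀ k : Fin (2^m), ((eeq m (Sum.inr k) : ℕ)) = 2*(k:ℕ)+1 := fun k => rfl
    have hblock : (Cmat (m+1)).submatrix (eeq m) (eeq m) =
        Matrix.fromBlocks 1 0
          (Matrix.of fun k l => (Cmat (m+1)).submatrix (eeq m) (eeq m) (Sum.inr k) (Sum.inl l)) (Cmat m) := by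
      ext i j
      rcases i with k | k <;> rcases j with l | l
      · show ((Afun (m+1) (2*(k:ℕ)) (2*(2*(l:ℕ))+1) : ℤ) : ZMod 2) = (1 : Matrix _ _ (ZMod 2)) k l
        rw [L1 (m+1) k (2*l) (by omega) (by have := l.isLt; simp [pow_succ] at *; omega)]
        rw [Matrix.one_apply]
        have : ((2*(l:ℕ) = 2*(k:ℕ))) ↔ (k = l) := by
          rw [Fin.ext_iff]; omega
        simp only [this]
        split <;> simp
      · show ((Afun (m+1) (2*(k:ℕ)) (2*(2*(l:ℕ)+1)+1) : ℤ) : ZMod 2) = 0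
        rw [L1 (m+1) k (2*l+1) (by omega) (by have := l.isLt; simp [pow_succ] at *; omega)]
        rw [if_neg (by omega)]
        norm_num
      · rfl
      · show ((Afun (m+1) (2*(k:ℕ)+1) (2*(2*(l:ℕ)+1)+1) : ℤ) : ZMod 2) = Cmat m k l
        have : 2*(2*(l:ℕ)+1)+1 = 4*(l:ℕ)+3 := by ring
        rw [this, L2 m k l k.isLt l.isLt]
        rfl
    rw [hblock, Matrix.det_fromBlocks_zero₁₂, Matrix.det_one, one_mul, ih]

lemma prodeq (m : ℕ) : (Amat (m+2-1) * E2mat (m+2-1)) =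
    (Matrix.of fun (i : Fin (2^m)) (j : Fin (2^m)) => Afun m (i:ℕ) (2*(j:ℕ)+1)) := by
  ext i j
  have hj : (j:ℕ) < 2^m := j.isLt
  have h2 : (2:ℕ)^(m+1) = 2*2^m := by ring
  have hb : 2*(j:ℕ)+1 < 2^(m+2-1) := by show 2*(j:ℕ)+1 < 2^(m+1); omega
  rw [Matrix.mul_apply]
  rw [Finset.sum_eq_single (⟨2*(j:ℕ)+1, hb⟩ : Fin (2^(m+2-1)))]
  · show Afun (m+2-1-1) (i:ℕ) (2*(j:ℕ)+1) * (if 2*(j:ℕ)+1 = 2*(j:ℕ)+1 then 1 else 0) = _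
    rw [if_pos rfl, mul_one]
    rfl
  · intro b _ hbne
    show Afun (m+2-1-1) (i:ℕ) (b:ℕ) * (if (b:ℕ) = 2*(j:ℕ)+1 then 1 else 0) = 0
    rw [if_neg (fun h => hbne (Fin.ext h)), mul_zero]
  · intro h
    exact absurd (Finset.mem_univ _) h

/-- For all `d ≥ 2` the determinant of the square integer
matrix `A_{d-1} ℰ_{d-1}^{(2)}` of size `2^(d-2)` is odd:
`det(A_{d-1} ℰ_{d-1}^{(2)}) ≡ 1 (mod 2)`. -/
theorem statement3 (d : ℕ) (hd : 2 ≤ d) :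
    Int.ModEq 2 (Matrix.det (Amat (d - 1) * E2mat (d - 1))) 1 := by
  obtain ⟨m, rfl⟩ : ∃ m, d = m + 2 := ⟨d - 2, by omega⟩
  rw [show (2:ℤ) = ((2:ℕ):ℤ) by norm_num, ← ZMod.intCast_eq_intCast_iff]
  push_cast
  have : ((Matrix.det (Amat (m+2-1) * E2mat (m+2-1)) : ℤ) : ZMod 2) =
      ((Amat (m+2-1) * E2mat (m+2-1)).map (Int.castRingHom (ZMod 2))).det :=
    RingHom.map_det (Int.castRingHom (ZMod 2)) _
  change ((Amat (m+2-1) * E2mat (m+2-1)).map (Int.castRingHom (ZMod 2))).det = 1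
  rw [prodeq m]
  have : ((Matrix.of fun (i : Fin (2^m)) (j : Fin (2^m)) => Afun m (i:ℕ) (2*(j:ℕ)+1)).map
      (Int.castRingHom (ZMod 2))) = Cmat m := by
    ext i j
    rfl
  rw [this, detC]
end

section
/- The derivation ∂₁ and the anti-automorphism τ commute modulo 2: for every word w in x, y, the element ∂₁(τ(w)) − τ(∂₁(w)) of ℌ has all of its integer coefficients even. -/
/- ℌ = ℚ⟨x,y⟩ realized as the monoid algebra of the free monoid on two letters,
   where `false` plays the role of the letter x and `true` of the letter y. -/
noncomputable section

def Z2 : AddSubgroup ℚ := AddSubgroup.zmultiples 2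

lemma mem_mul_single (p : H) (hp : ∀ m, p.coeff m ∈ Z2) (w : FreeMonoid Bool) (n : FreeMonoid Bool) :
    (p * MonoidAlgebra.single w (1:ℚ)).coeff n ∈ Z2 := by
  classical
  rw [MonoidAlgebra.coeff_mul]
  apply AddSubgroup.sum_mem
  intro a _
  dsimp only
  rw [MonoidAlgebra.coeff_single, Finsupp.sum_single_index (by simp)]
  split_ifs
  · simpa using hp a
  · exact zero_mem _

lemma mem_single_mul (p : H) (hp : ∀ m, p.coeff m ∈ Z2) (w : FreeMonoid Bool) (n : FreeMonoid Bool) :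
    (MonoidAlgebra.single w (1:ℚ) * p).coeff n ∈ Z2 := by
  classical
  rw [MonoidAlgebra.coeff_mul, MonoidAlgebra.coeff_single, Finsupp.sum_single_index (by simp)]
  apply AddSubgroup.sum_mem
  intro a _
  dsimp only
  split_ifs
  · simpa using hp a
  · exact zero_mem _

/-- Let `D = ∂₁` be the (unique) derivation of ℌ with
`∂₁(x) = xy` and `∂₁(y) = -xy`, and let `T = τ` be the (unique)
anti-automorphism of ℌ with `τ(x) = y` and `τ(y) = x`.  Then `∂₁` and `τ`
commute modulo 2: for every word `w` in x, y the element
`∂₁(τ(w)) - τ(∂₁(w))` has all of its integer coefficients even. -/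
theorem statement6 (D : H →ₗ[ℚ] H)
    (hleib : ∀ a b : H, D (a * b) = D a * b + a * D b)
    (hDx : D X = X * Y) (hDy : D Y = -(X * Y))
    (T : H →ₗ[ℚ] H)
    (hTmul : ∀ a b : H, T (a * b) = T b * T a)
    (hT1 : T 1 = 1) (hTx : T X = Y) (hTy : T Y = X)
    (w : FreeMonoid Bool) :
    Even2 (D (T (MonoidAlgebra.single w 1)) - T (D (MonoidAlgebra.single w 1))) := by
  have hD1 : D 1 = 0 := by
    have h := hleib 1 1
    simp only [one_mul, mul_one] at h
    exact (left_eq_add.mp h)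
  have hTsingle : ∀ w : FreeMonoid Bool, ∃ m, T (MonoidAlgebra.single w (1:ℚ)) =
      MonoidAlgebra.single m 1 := by
    intro w
    induction w using FreeMonoid.recOn with
    | one => exact ⟨1, by rw [← MonoidAlgebra.one_def, hT1, MonoidAlgebra.one_def]⟩
    | of_mul b w ih =>
      obtain ⟨m, hm⟩ := ih
      have : MonoidAlgebra.single (FreeMonoid.of b * w) (1:ℚ) =
          MonoidAlgebra.single (FreeMonoid.of b) 1 * MonoidAlgebra.single w 1 := by
        rw [MonoidAlgebra.single_mul_single, one_mul]
      rw [this, hTmul, hm]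
      cases b
      · exact ⟨m * FreeMonoid.of true, by
          rw [show MonoidAlgebra.single (FreeMonoid.of false) (1:ℚ) = X from rfl, hTx, Y,
            MonoidAlgebra.single_mul_single, one_mul]⟩
      · exact ⟨m * FreeMonoid.of false, by
          rw [show MonoidAlgebra.single (FreeMonoid.of true) (1:ℚ) = Y from rfl, hTy, X,
            MonoidAlgebra.single_mul_single, one_mul]⟩
  have hXY : (X * Y : H) = MonoidAlgebra.single (FreeMonoid.of false * FreeMonoid.of true) 1 := by
    rw [X, Y, MonoidAlgebra.single_mul_single, one_mul]
  have hletter : ∀ b : Bool, ∀ n,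
      (D (T (MonoidAlgebra.single (FreeMonoid.of b) (1:ℚ))) -
        T (D (MonoidAlgebra.single (FreeMonoid.of b) 1))).coeff n ∈ Z2 := by
    intro b n
    classical
    cases b
    · show (D (T X) - T (D X)).coeff n ∈ Z2
      rw [hTx, hDy, hDx, hTmul, hTx, hTy, hXY]
      rw [MonoidAlgebra.coeff_sub, Finsupp.sub_apply, MonoidAlgebra.coeff_neg, Finsupp.neg_apply, MonoidAlgebra.coeff_single, Finsupp.single_apply]
      split_ifs
      · exact AddSubgroup.mem_zmultiples_iff.mpr ⟨-1, by norm_num⟩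
      · exact AddSubgroup.mem_zmultiples_iff.mpr ⟨0, by norm_num⟩
    · show (D (T Y) - T (D Y)).coeff n ∈ Z2
      rw [hTy, hDx, hDy, map_neg, hTmul, hTx, hTy, hXY, sub_neg_eq_add]
      rw [MonoidAlgebra.coeff_add, Finsupp.add_apply, MonoidAlgebra.coeff_single, Finsupp.single_apply]
      split_ifs
      · exact AddSubgroup.mem_zmultiples_iff.mpr ⟨1, by norm_num⟩
      · exact AddSubgroup.mem_zmultiples_iff.mpr ⟨0, by norm_num⟩
  have main : ∀ w : FreeMonoid Bool, ∀ n,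
      (D (T (MonoidAlgebra.single w (1:ℚ))) - T (D (MonoidAlgebra.single w 1))).coeff n ∈ Z2 := by
    intro w
    induction w using FreeMonoid.recOn with
    | one =>
      intro n
      rw [← MonoidAlgebra.one_def, hT1, hD1, map_zero, sub_zero]
      simpa using zero_mem Z2
    | of_mul b w ih =>
      intro n
      obtain ⟨ma, hma⟩ := hTsingle (FreeMonoid.of b)
      obtain ⟨ms, hms⟩ := hTsingle w
      have hsplit : MonoidAlgebra.single (FreeMonoid.of b * w) (1:ℚ) =
          MonoidAlgebra.single (FreeMonoid.of b) 1 * MonoidAlgebra.single w 1 := by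
        rw [MonoidAlgebra.single_mul_single, one_mul]
      set a : H := MonoidAlgebra.single (FreeMonoid.of b) (1:ℚ) with ha
      set s : H := MonoidAlgebra.single w (1:ℚ) with hs
      have key : D (T (a * s)) - T (D (a * s)) =
          (D (T s) - T (D s)) * T a + T s * (D (T a) - T (D a)) := by
        rw [hTmul, hleib, hleib, map_add, hTmul, hTmul]
        noncomm_ring
      rw [hsplit, key]
      rw [MonoidAlgebra.coeff_add, Finsupp.add_apply]
      apply add_mem
      · rw [hma]
        exact mem_mul_single _ ih ma n
      · rw [hms]
        exact mem_single_mul _ (hletter b) ms n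
  intro m
  obtain ⟨k, hk⟩ := AddSubgroup.mem_zmultiples_iff.mp (main w m)
  exact ⟨k, by rw [← hk, zsmul_eq_mul, mul_comm]⟩


end
end

section
/- For all d ≥ 2 one has the matrix congruences A_{d−1} ℰ_{d−1}^{(2)} ≡ T_d A_{d−1}^{(1)} T_d (mod 2) and A_{d−1} ℰ_{d−1}^{(1)} ≡ T_d A_{d−1}^{(2)} T_d (mod 2), where all matrices are square of size 2^{d−2}. -/
/-- The anti-automorphism τ of ℌ (with τ(x) = y, τ(y) = x) on words:
reverse the word and swap the two letters. -/
def tauWord (l : List Bool) : List Bool := l.reverse.map (fun b => !b)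

/-- Entries of the permutation matrix `T_d` of size `2^(d-2)` determined by
`T_d w_d = τ(w_d)` (τ applied entrywise): its `(i,j)` entry is `1` exactly
when the `j`-th monomial of degree `d` is τ of the `i`-th one. -/
def Tfun (d i j : ℕ) : ℤ :=
  if wordList d j = tauWord (wordList d i) then 1 else 0

/-- Entries of the `2^d × 2^(d-1)` matrix `ℰ_d^{(1)}`: `δ_{i,2j}` (0-indexed). -/
def E1fun (i j : ℕ) : ℤ := if i = 2 * j then 1 else 0

/-- Entries of the `2^d × 2^(d-1)` matrix `ℰ_d^{(2)}`: `δ_{i,2j+1}` (0-indexed). -/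
def E2fun (i j : ℕ) : ℤ := if i = 2 * j + 1 then 1 else 0

def bitsMS : ℕ → ℕ → List Bool
  | 0, _ => []
  | m + 1, n => if n < 2 ^ m then false :: bitsMS m n else true :: bitsMS m (n - 2 ^ m)

lemma bitsMS_length (m n : ℕ) : (bitsMS m n).length = m := by
  induction m generalizing n with
  | zero => rfl
  | succ m ih => unfold bitsMS; split <;> simp [ih]

lemma bitsMS_inj {m a b : ℕ} (ha : a < 2 ^ m) (hb : b < 2 ^ m)
    (h : bitsMS m a = bitsMS m b) : a = b := by
  induction m generalizing a b with
  | zero => omega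
  | succ m ih =>
    have h2 : (2:ℕ) ^ (m+1) = 2 * 2 ^ m := by ring
    unfold bitsMS at h
    split at h <;> split at h <;> simp_all
    · exact ih (by omega) (by omega) h
    · have := ih (a := a - 2 ^ m) (b := b - 2 ^ m) (by omega) (by omega) h
      omega


/-- The permutation σ with σ(i) = 2^m - 1 - bitreverse(i). -/
def sig : ℕ → ℕ → ℕ
  | 0, _ => 0
  | m + 1, i => if i < 2 ^ m then 2 * sig m i + 1 else 2 * sig m (i - 2 ^ m)

lemma bitsMS_div {m n : ℕ} (hn : n < 2 ^ (m + 1)) :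
    bitsMS (m + 1) n = bitsMS m (n / 2) ++ [decide (n % 2 = 1)] := by
  induction m generalizing n with
  | zero =>
    interval_cases n <;> simp [bitsMS]
  | succ m ih =>
    have h2 : (2:ℕ) ^ (m+1) = 2 * 2 ^ m := by ring
    have h4 : (2:ℕ) ^ (m+2) = 4 * 2 ^ m := by ring
    rw [show bitsMS (m+2) n = if n < 2 ^ (m+1) then false :: bitsMS (m+1) n
        else true :: bitsMS (m+1) (n - 2^(m+1)) from rfl]
    split
    · rename_i h
      rw [ih h]
      have hd : n / 2 < 2 ^ m := by omega
      rw [show bitsMS (m+1) (n/2) = false :: bitsMS m (n/2) from if_pos hd]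
      simp
    · rename_i h
      rw [ih (by omega)]
      have hd : ¬ (n / 2 < 2 ^ m) := by omega
      rw [show bitsMS (m+1) (n/2) = true :: bitsMS m (n/2 - 2^m) from if_neg hd]
      have e1 : (n - 2 ^ (m+1)) / 2 = n / 2 - 2 ^ m := by omega
      have e2 : (n - 2 ^ (m+1)) % 2 = n % 2 := by omega
      simp [e1, e2]

lemma sig_lt {m i : ℕ} (hi : i < 2 ^ m) : sig m i < 2 ^ m := by
  induction m generalizing i with
  | zero => simp [sig]
  | succ m ih =>
    have h2 : (2:ℕ) ^ (m+1) = 2 * 2 ^ m := by ring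
    unfold sig
    split
    · have := ih (i := i) (by omega); omega
    · have := ih (i := i - 2 ^ m) (by omega); omega

lemma bitsMS_sig {m i : ℕ} (hi : i < 2 ^ m) :
    bitsMS m (sig m i) = ((bitsMS m i).map (fun b => !b)).reverse := by
  induction m generalizing i with
  | zero => rfl
  | succ m ih =>
    have h2 : (2:ℕ) ^ (m+1) = 2 * 2 ^ m := by ring
    unfold sig
    split
    · rename_i h
      have hs := sig_lt h
      rw [bitsMS_div (by omega)]
      have e1 : (2 * sig m i + 1) / 2 = sig m i := by omega
      have e2 : (2 * sig m i + 1) % 2 = 1 := by omega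
      rw [e1, ih h, show bitsMS (m+1) i = false :: bitsMS m i from if_pos h]
      simp [e2]
    · rename_i h
      have hs := sig_lt (m := m) (i := i - 2 ^ m) (by omega)
      rw [bitsMS_div (by omega)]
      have e1 : (2 * sig m (i - 2^m)) / 2 = sig m (i - 2^m) := by omega
      have e2 : (2 * sig m (i - 2^m)) % 2 = 0 := by omega
      rw [e1, ih (by omega), show bitsMS (m+1) i = true :: bitsMS m (i - 2^m) from if_neg h]
      simp [e2]

lemma sig_sig {m i : ℕ} (hi : i < 2 ^ m) : sig m (sig m i) = i := by
  refine bitsMS_inj (sig_lt (sig_lt hi)) hi ?_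
  rw [bitsMS_sig (sig_lt hi), bitsMS_sig hi]
  simp only [← List.map_reverse, List.map_map]
  simp [Function.comp_def]


/-- not sublist when the shorter is longer -/
lemma not_sublist_of_length {l₁ l₂ : List Bool} (h : l₂.length < l₁.length) :
    ¬ l₁.Sublist l₂ := fun hs => absurd hs.length_le (by omega)

lemma Afun_eq_sublist {m i j : ℕ} (hi : i < 2 ^ m) (hj : j < 2 ^ (m + 1)) :
    Afun m i j = if (bitsMS m i).Sublist (bitsMS (m + 1) j) then 1 else 0 := by
  induction m generalizing i j with
  | zero =>
    interval_cases i
    interval_cases j <;> simp [Afun, bitsMS]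
  | succ m ih =>
    have h2 : (2:ℕ) ^ (m+1) = 2 * 2 ^ m := by ring
    have h4 : (2:ℕ) ^ (m+2) = 4 * 2 ^ m := by ring
    rw [show Afun (m+1) i j = (if i < 2 ^ m then
      if j < 2 ^ (m + 1) then Afun m i j
      else if j < 2 ^ (m + 1) + 2 ^ m then (if j = i + 2 ^ (m + 1) then 1 else 0)
      else 0
    else
      if j < 2 ^ m then 0
      else if j < 2 ^ (m + 1) then (if j = i then 1 else 0)
      else Afun m (i - 2 ^ m) (j - 2 ^ (m + 1))) from rfl]
    by_cases hi' : i < 2 ^ m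
    · rw [if_pos hi', show bitsMS (m+1) i = false :: bitsMS m i from if_pos hi']
      by_cases hj1 : j < 2 ^ (m+1)
      · rw [if_pos hj1, ih hi' hj1,
          show bitsMS (m+2) j = false :: bitsMS (m+1) j from if_pos hj1]
        simp only [List.cons_sublist_cons]
      · rw [if_neg hj1]
        have hbj : bitsMS (m+2) j = true :: bitsMS (m+1) (j - 2^(m+1)) := if_neg hj1
        by_cases hj2 : j < 2 ^ (m+1) + 2 ^ m
        · rw [if_pos hj2]
          have hbj2 : bitsMS (m+1) (j - 2^(m+1)) = false :: bitsMS m (j - 2^(m+1)) :=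
            if_pos (by omega)
          rw [hbj, hbj2]
          by_cases he : j = i + 2 ^ (m+1)
          · rw [if_pos he, if_pos]
            have : bitsMS m (j - 2^(m+1)) = bitsMS m i := by rw [he]; simp
            rw [this]
            exact List.sublist_cons_self _ _
          · rw [if_neg he, if_neg]
            intro hs
            -- false::bits i <+ true::false::bits (j-2^(m+1)), must skip true,
            -- then equal lengths force equality
            have hs' : (false :: bitsMS m i).Sublist (false :: bitsMS m (j - 2^(m+1))) := by
              cases hs with
              | cons _ h => exact h
            have heq := hs'.eq_of_length (by simp [bitsMS_length])
            have heq2 : bitsMS m i = bitsMS m (j - 2 ^ (m+1)) := by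
              injection heq
            have := bitsMS_inj (m := m) (a := i) (b := j - 2^(m+1)) (by omega) (by omega) heq2
            omega
        · rw [if_neg hj2, hbj]
          have hbj2 : bitsMS (m+1) (j - 2^(m+1)) = true :: bitsMS m (j - 2^(m+1) - 2^m) :=
            if_neg (by omega)
          rw [hbj2, if_neg]
          intro hs
          have hs' : (false :: bitsMS m i).Sublist (bitsMS m (j - 2^(m+1) - 2^m)) := by
            cases hs with
            | cons _ h => cases h with
              | cons _ h => exact h
          exact not_sublist_of_length (by simp [bitsMS_length]) hs'
    · rw [if_neg hi', show bitsMS (m+1) i = true :: bitsMS m (i - 2^m) from if_neg hi']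
      by_cases hj0 : j < 2 ^ m
      · rw [if_pos hj0]
        have hbj : bitsMS (m+2) j = false :: bitsMS (m+1) j := if_pos (by omega)
        have hbj2 : bitsMS (m+1) j = false :: bitsMS m j := if_pos hj0
        rw [hbj, hbj2, if_neg]
        intro hs
        have hs' : (true :: bitsMS m (i - 2^m)).Sublist (bitsMS m j) := by
          cases hs with
          | cons _ h => cases h with
            | cons _ h => exact h
        exact not_sublist_of_length (by simp [bitsMS_length]) hs'
      · rw [if_neg hj0]
        by_cases hj1 : j < 2 ^ (m+1)
        · rw [if_pos hj1]
          have hbj : bitsMS (m+2) j = false :: bitsMS (m+1) j := if_pos (by omega)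
          have hbj2 : bitsMS (m+1) j = true :: bitsMS m (j - 2^m) := if_neg hj0
          rw [hbj, hbj2]
          by_cases he : j = i
          · rw [if_pos he, if_pos]
            have : bitsMS m (j - 2^m) = bitsMS m (i - 2^m) := by rw [he]
            rw [this]
            exact List.sublist_cons_self _ _
          · rw [if_neg he, if_neg]
            intro hs
            have hs' : (true :: bitsMS m (i - 2^m)).Sublist (true :: bitsMS m (j - 2^m)) := by
              cases hs with
              | cons _ h => exact h
            have heq := hs'.eq_of_length (by simp [bitsMS_length])
            have heq2 : bitsMS m (i - 2 ^ m) = bitsMS m (j - 2 ^ m) := by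
              injection heq
            have := bitsMS_inj (m := m) (a := i - 2^m) (b := j - 2^m) (by omega) (by omega) heq2
            omega
        · rw [if_neg hj1, ih (by omega) (by omega)]
          have hbj : bitsMS (m+2) j = true :: bitsMS (m+1) (j - 2^(m+1)) := if_neg (by omega)
          rw [hbj]
          simp only [List.cons_sublist_cons]

lemma map_not_sublist {s t : List Bool} :
    (s.map (fun b => !b)).Sublist (t.map (fun b => !b)) ↔ s.Sublist t := by
  constructor
  · intro h
    have := h.map (fun b => !b)
    simpa [List.map_map, Function.comp_def] using this
  · exact fun h => h.map _

lemma keylem {m i j : ℕ} (hi : i < 2 ^ m) (hj : j < 2 ^ m) :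
    Afun m i (2 * j + 1) = Afun m (sig m i) (sig m j) ∧
    Afun m i (2 * j) = Afun m (sig m i) (sig m j + 2 ^ m) := by
  have h2 : (2:ℕ) ^ (m + 1) = 2 * 2 ^ m := by ring
  have hsi := sig_lt hi
  have hsj := sig_lt hj
  have b1 : bitsMS (m+1) (2*j+1) = bitsMS m j ++ [true] := by
    rw [bitsMS_div (by omega)]
    have e1 : (2*j+1)/2 = j := by omega
    have e2 : (2*j+1)%2 = 1 := by omega
    simp [e1, e2]
  have b2 : bitsMS (m+1) (2*j) = bitsMS m j ++ [false] := by
    rw [bitsMS_div (by omega)]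
    have e1 : (2*j)/2 = j := by omega
    have e2 : (2*j)%2 = 0 := by omega
    simp [e1, e2]
  have b3 : bitsMS (m+1) (sig m j) = false :: bitsMS m (sig m j) := if_pos hsj
  have b4 : bitsMS (m+1) (sig m j + 2^m) = true :: bitsMS m (sig m j) := by
    rw [show bitsMS (m+1) (sig m j + 2^m) = if sig m j + 2^m < 2^m then
        false :: bitsMS m (sig m j + 2^m) else true :: bitsMS m (sig m j + 2^m - 2^m)
        from rfl, if_neg (by omega)]
    simp
  constructor
  · rw [Afun_eq_sublist hi (by omega), Afun_eq_sublist hsi (by omega), b1, b3,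
      bitsMS_sig hi, bitsMS_sig hj]
    refine if_congr ?_ rfl rfl
    have e : false :: ((bitsMS m j).map (fun b => !b)).reverse
        = (((bitsMS m j) ++ [true]).map (fun b => !b)).reverse := by simp
    rw [e, List.reverse_sublist, map_not_sublist]
  · rw [Afun_eq_sublist hi (by omega), Afun_eq_sublist hsi (by omega), b2, b4,
      bitsMS_sig hi, bitsMS_sig hj]
    refine if_congr ?_ rfl rfl
    have e : true :: ((bitsMS m j).map (fun b => !b)).reverse
        = (((bitsMS m j) ++ [false]).map (fun b => !b)).reverse := by simp
    rw [e, List.reverse_sublist, map_not_sublist]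

lemma testBit_sub_pow {m p n : ℕ} (hp : p < m) (hn : 2 ^ m ≤ n) :
    (n - 2 ^ m).testBit p = n.testBit p := by
  conv_rhs => rw [← Nat.add_sub_cancel' hn]
  rw [Nat.testBit_two_pow_add_gt hp]

lemma bits_testBit {m n : ℕ} (hn : n < 2 ^ m) :
    (List.range m).map (fun k => n.testBit (m - 1 - k)) = bitsMS m n := by
  induction m generalizing n with
  | zero => rfl
  | succ m ih =>
    have h2 : (2:ℕ) ^ (m + 1) = 2 * 2 ^ m := by ring
    rw [List.range_succ_eq_map, List.map_cons, List.map_map]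
    by_cases h : n < 2 ^ m
    · rw [show bitsMS (m+1) n = false :: bitsMS m n from if_pos h]
      congr 1
      · simpa using Nat.testBit_lt_two_pow h
      · rw [← ih h]
        refine List.map_congr_left fun k hk => ?_
        simp only [Function.comp_def]
        congr 1
        omega
    · rw [show bitsMS (m+1) n = true :: bitsMS m (n - 2 ^ m) from if_neg h]
      congr 1
      · have hdiv : n / 2 ^ m = 1 := Nat.div_eq_of_lt_le (by omega) (by omega)
        simp [Nat.testBit_eq_decide_div_mod_eq, hdiv]
      · rw [← ih (by omega)]
        refine List.map_congr_left fun k hk => ?_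
        have hk' : k < m := List.mem_range.mp hk
        simp only [Function.comp_def]
        rw [show m + 1 - 1 - (k + 1) = m - 1 - k by omega]
        exact (testBit_sub_pow (by omega) (by omega)).symm

lemma Tfun_eq {m i j : ℕ} (hi : i < 2 ^ m) (hj : j < 2 ^ m) :
    Tfun (m + 2) i j = if j = sig m i then 1 else 0 := by
  have hsi := sig_lt hi
  have hw : ∀ n, n < 2 ^ m → wordList (m + 2) n = (false :: bitsMS m n) ++ [true] := by
    intro n hn
    unfold wordList
    rw [show m + 2 - 2 = m from rfl]
    rw [show (fun k => Nat.testBit n (m + 2 - 3 - k)) = (fun k => Nat.testBit n (m - 1 - k))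
      from rfl]
    rw [bits_testBit hn]
  unfold Tfun
  rw [hw j hj, hw i hi]
  refine if_congr ?_ rfl rfl
  have htau : tauWord ((false :: bitsMS m i) ++ [true])
      = (false :: ((bitsMS m i).map (fun b => !b)).reverse) ++ [true] := by
    unfold tauWord
    simp [List.map_reverse]
  rw [htau, ← bitsMS_sig hi]
  constructor
  · intro h
    have : bitsMS m j = bitsMS m (sig m i) := by
      simpa [List.append_left_inj] using h
    exact bitsMS_inj hj hsi this
  · intro h; rw [h]

lemma collapse (m : ℕ) (i j : Fin (2 ^ m)) (g : ℕ → ℕ → ℤ) :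
    (∑ k : Fin (2 ^ m), ∑ l : Fin (2 ^ m),
      Tfun (m + 2) (i : ℕ) (k : ℕ) * g (k : ℕ) (l : ℕ) * Tfun (m + 2) (l : ℕ) (j : ℕ))
      = g (sig m (i : ℕ)) (sig m (j : ℕ)) := by
  have hsi := sig_lt i.2
  have hsj := sig_lt j.2
  have hT : ∀ a b : Fin (2 ^ m),
      Tfun (m + 2) (a : ℕ) (b : ℕ) = if (b : ℕ) = sig m (a : ℕ) then 1 else 0 :=
    fun a b => Tfun_eq a.2 b.2
  rw [Finset.sum_eq_single (⟨sig m (i : ℕ), hsi⟩ : Fin (2 ^ m))]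
  · rw [Finset.sum_eq_single (⟨sig m (j : ℕ), hsj⟩ : Fin (2 ^ m))]
    · rw [hT i ⟨sig m (i : ℕ), hsi⟩, hT ⟨sig m (j : ℕ), hsj⟩ j]
      have hjj : (j : ℕ) = sig m ((⟨sig m (j : ℕ), hsj⟩ : Fin (2 ^ m)) : ℕ) :=
        (sig_sig j.2).symm
      rw [if_pos rfl, if_pos hjj]
      ring
    · intro b _ hb
      rw [hT b j, if_neg, mul_zero]
      intro h
      apply hb
      apply Fin.ext
      have : sig m (j : ℕ) = sig m (sig m (b : ℕ)) := by rw [h]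
      rw [sig_sig b.2] at this
      exact this.symm
    · intro h; exact absurd (Finset.mem_univ _) h
  · intro b _ hb
    refine Finset.sum_eq_zero fun l _ => ?_
    rw [hT i b, if_neg, zero_mul, zero_mul]
    exact fun h => hb (Fin.ext h)
  · intro h; exact absurd (Finset.mem_univ _) h

lemma sum_E (m : ℕ) (i j : Fin (2 ^ m)) :
    (∑ k : Fin (2 ^ (m + 1)), Afun m (i : ℕ) (k : ℕ) * E2fun (k : ℕ) (j : ℕ))
      = Afun m (i : ℕ) (2 * (j : ℕ) + 1) ∧
    (∑ k : Fin (2 ^ (m + 1)), Afun m (i : ℕ) (k : ℕ) * E1fun (k : ℕ) (j : ℕ))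
      = Afun m (i : ℕ) (2 * (j : ℕ)) := by
  have h2 : (2:ℕ) ^ (m + 1) = 2 * 2 ^ m := by ring
  have hj := j.2
  constructor
  · rw [Finset.sum_eq_single (⟨2 * (j : ℕ) + 1, by omega⟩ : Fin (2 ^ (m + 1)))]
    · simp [E2fun]
    · intro b _ hb
      rw [show E2fun (b : ℕ) (j : ℕ) = 0 from if_neg fun h => hb (Fin.ext h), mul_zero]
    · intro h; exact absurd (Finset.mem_univ _) h
  · rw [Finset.sum_eq_single (⟨2 * (j : ℕ), by omega⟩ : Fin (2 ^ (m + 1)))]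
    · simp [E1fun]
    · intro b _ hb
      rw [show E1fun (b : ℕ) (j : ℕ) = 0 from if_neg fun h => hb (Fin.ext h), mul_zero]
    · intro h; exact absurd (Finset.mem_univ _) h

lemma mainlem (m : ℕ) (i j : Fin (2 ^ m)) :
    Int.ModEq 2
      (∑ k : Fin (2 ^ (m + 1)), Afun m (i : ℕ) (k : ℕ) * E2fun (k : ℕ) (j : ℕ))
      (∑ k : Fin (2 ^ m), ∑ l : Fin (2 ^ m),
        Tfun (m + 2) (i : ℕ) (k : ℕ) * Afun m (k : ℕ) (l : ℕ) * Tfun (m + 2) (l : ℕ) (j : ℕ))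
    ∧ Int.ModEq 2
      (∑ k : Fin (2 ^ (m + 1)), Afun m (i : ℕ) (k : ℕ) * E1fun (k : ℕ) (j : ℕ))
      (∑ k : Fin (2 ^ m), ∑ l : Fin (2 ^ m),
        Tfun (m + 2) (i : ℕ) (k : ℕ) * Afun m (k : ℕ) ((l : ℕ) + 2 ^ m)
          * Tfun (m + 2) (l : ℕ) (j : ℕ)) := by
  obtain ⟨hk1, hk2⟩ := keylem i.2 j.2
  obtain ⟨hs1, hs2⟩ := sum_E m i j
  constructor
  · rw [hs1, collapse m i j (Afun m), hk1]
  · rw [hs2, collapse m i j (fun k l => Afun m k (l + 2 ^ m)), hk2]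

/-- For all `d ≥ 2` one has the entrywise matrix congruences
`A_{d-1} ℰ_{d-1}^{(2)} ≡ T_d A_{d-1}^{(1)} T_d (mod 2)` and
`A_{d-1} ℰ_{d-1}^{(1)} ≡ T_d A_{d-1}^{(2)} T_d (mod 2)`, where all matrices
are square of size `2^(d-2)` and the products are written out entrywise. -/
theorem statement8 (d : ℕ) (hd : 2 ≤ d) (i j : Fin (2 ^ (d - 2))) :
    Int.ModEq 2
      (∑ k : Fin (2 ^ (d - 1)), Afun (d - 2) (i : ℕ) (k : ℕ) * E2fun (k : ℕ) (j : ℕ))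
      (∑ k : Fin (2 ^ (d - 2)), ∑ l : Fin (2 ^ (d - 2)),
        Tfun d (i : ℕ) (k : ℕ) * Afun (d - 2) (k : ℕ) (l : ℕ) * Tfun d (l : ℕ) (j : ℕ))
    ∧ Int.ModEq 2
      (∑ k : Fin (2 ^ (d - 1)), Afun (d - 2) (i : ℕ) (k : ℕ) * E1fun (k : ℕ) (j : ℕ))
      (∑ k : Fin (2 ^ (d - 2)), ∑ l : Fin (2 ^ (d - 2)),
        Tfun d (i : ℕ) (k : ℕ) * Afun (d - 2) (k : ℕ) ((l : ℕ) + 2 ^ (d - 2))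
          * Tfun d (l : ℕ) (j : ℕ)) := by
  obtain ⟨m, rfl⟩ : ∃ m, d = m + 2 := ⟨d - 2, by omega⟩
  exact mainlem m i j
end

section
/- For all n ≥ 1 the matrix A_n^{(1)} is upper triangular with every diagonal entry equal to 1; in particular det(A_n^{(1)}) = 1. -/
/-- The left square half `A_n^{(1)}` of `A_n` (columns `j < 2^(n-1)`),
a square matrix of size `2^(n-1)`. -/
def A1mat (n : ℕ) : Matrix (Fin (2 ^ (n - 1))) (Fin (2 ^ (n - 1))) ℤ :=
  Matrix.of fun i j => Afun (n - 1) (i : ℕ) (j : ℕ)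

lemma Afun_lower (m : ℕ) : ∀ i j : ℕ, i < 2 ^ m → j < i → Afun m i j = 0 := by
  induction m with
  | zero => intro i j hi hj; omega
  | succ m ih =>
    intro i j hi hj
    rw [Afun]
    by_cases h1 : i < 2 ^ m
    · rw [if_pos h1, if_pos (by omega)]
      exact ih i j h1 hj
    · rw [if_neg h1]
      by_cases h2 : j < 2 ^ m
      · rw [if_pos h2]
      · rw [if_neg h2, if_pos (by omega), if_neg (by omega)]

lemma Afun_diag (m : ℕ) : ∀ i : ℕ, i < 2 ^ m → Afun m i i = 1 := by
  induction m with
  | zero => intro i hi; interval_cases i; rw [Afun]; simp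
  | succ m ih =>
    intro i hi
    rw [Afun]
    by_cases h1 : i < 2 ^ m
    · rw [if_pos h1, if_pos (by omega)]
      exact ih i h1
    · rw [if_neg h1, if_neg (by omega), if_pos hi, if_pos rfl]

/-- For all `n ≥ 1` the matrix `A_n^{(1)}` is upper
triangular with every diagonal entry equal to `1`; in particular
`det(A_n^{(1)}) = 1`. -/
theorem statement9 (n : ℕ) (hn : 1 ≤ n) :
    (∀ i j : Fin (2 ^ (n - 1)), (j : ℕ) < (i : ℕ) → A1mat n i j = 0)
      ∧ (∀ i : Fin (2 ^ (n - 1)), A1mat n i i = 1)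
      ∧ Matrix.det (A1mat n) = 1 := by
  have hlt : ∀ i j : Fin (2 ^ (n - 1)), (j : ℕ) < (i : ℕ) → A1mat n i j = 0 := by
    intro i j h
    exact Afun_lower (n-1) i j i.isLt h
  have hdiag : ∀ i : Fin (2 ^ (n - 1)), A1mat n i i = 1 := by
    intro i
    exact Afun_diag (n-1) i i.isLt
  refine ⟨hlt, hdiag, ?_⟩
  rw [Matrix.det_of_upperTriangular (fun i j h => hlt i j h)]
  simp [hdiag]
end

section
/- For all d ≥ 2, the product of B_d with the square matrix (ℰ_{d−1}^{(1)} | ℰ_{d−1}^{(2)}) (horizontal concatenation, of size 2^{d−1}) equals the 2×2 block matrix whose blocks of size 2^{d−2} are: B_{d−1} in the top-left, the zero matrix in the top-right, B_{d−1} A_{d−1} ℰ_{d−1}^{(1)} in the bottom-left, and B_{d−1} A_{d−1} ℰ_{d−1}^{(2)} in the bottom-right. -/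
/-- `Bfun m i j` is the `(i,j)` entry (0-indexed) of the square matrix
`B_{m+1}` of size `2^m`, so `B_d = Bfun (d-1)`.  `B_1 = (1)` and `B_d` is the
vertical block concatenation of `B_{d-1} (ℰ_{d-1}^{(1)})ᵗ` (on top) and
`B_{d-1} A_{d-1}` (on the bottom): entrywise, since `(ℰ^{(1)})_{ij} = δ_{i,2j}`
(0-indexed), `(B_{d-1} (ℰ_{d-1}^{(1)})ᵗ)_{ij} = B_{d-1,(i,j/2)}` for even `j`
and `0` for odd `j`, while `(B_{d-1} A_{d-1})_{ij} = ∑_k B_{d-1,(i,k)} A_{d-1,(k,j)}`. -/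
def Bfun : ℕ → ℕ → ℕ → ℤ
  | 0, i, j => if i = 0 ∧ j = 0 then 1 else 0
  | m + 1, i, j =>
    if i < 2 ^ m then
      (if j % 2 = 0 then Bfun m i (j / 2) else 0)
    else
      ∑ k : Fin (2 ^ m), Bfun m (i - 2 ^ m) (k : ℕ) * Afun m (k : ℕ) j

/-- Entries of the square matrix `(ℰ_{d-1}^{(1)} | ℰ_{d-1}^{(2)})` of size
`2^(d-1)` (horizontal concatenation). -/
def Ecatfun (d i j : ℕ) : ℤ :=
  if j < 2 ^ (d - 2) then E1fun i j else E2fun i (j - 2 ^ (d - 2))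

/-- For all `d ≥ 2`, the product of `B_d` with the square
matrix `(ℰ_{d-1}^{(1)} | ℰ_{d-1}^{(2)})` of size `2^(d-1)` equals the 2×2
block matrix with blocks of size `2^(d-2)`: `B_{d-1}` in the top-left, `0` in
the top-right, `B_{d-1} A_{d-1} ℰ_{d-1}^{(1)}` in the bottom-left and
`B_{d-1} A_{d-1} ℰ_{d-1}^{(2)}` in the bottom-right (all products written out
entrywise). -/
theorem statement10 (d : ℕ) (hd : 2 ≤ d) (i j : Fin (2 ^ (d - 1))) :
    (∑ k : Fin (2 ^ (d - 1)), Bfun (d - 1) (i : ℕ) (k : ℕ) * Ecatfun d (k : ℕ) (j : ℕ)) =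
      if (i : ℕ) < 2 ^ (d - 2) then
        (if (j : ℕ) < 2 ^ (d - 2) then Bfun (d - 2) (i : ℕ) (j : ℕ) else 0)
      else
        (if (j : ℕ) < 2 ^ (d - 2) then
          ∑ k : Fin (2 ^ (d - 1)),
            (∑ l : Fin (2 ^ (d - 2)),
              Bfun (d - 2) ((i : ℕ) - 2 ^ (d - 2)) (l : ℕ) * Afun (d - 2) (l : ℕ) (k : ℕ))
              * E1fun (k : ℕ) (j : ℕ)
        else
          ∑ k : Fin (2 ^ (d - 1)),
            (∑ l : Fin (2 ^ (d - 2)),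
              Bfun (d - 2) ((i : ℕ) - 2 ^ (d - 2)) (l : ℕ) * Afun (d - 2) (l : ℕ) (k : ℕ))
              * E2fun (k : ℕ) ((j : ℕ) - 2 ^ (d - 2))) := by
  obtain ⟨m, rfl⟩ : ∃ m, d = m + 2 := ⟨d - 2, by omega⟩
  have hpw : 2 ^ (m + 1) = 2 * 2 ^ m := by ring
  have hm2 : (m + 2 : ℕ) - 2 = m := rfl
  have hm1 : (m + 2 : ℕ) - 1 = m + 1 := rfl
  simp only [hm1, hm2]
  have hj2 : (j : ℕ) < 2 ^ (m + 1) := j.2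
  by_cases hi : (i : ℕ) < 2 ^ m
  · simp only [hi, if_true]
    by_cases hj : (j : ℕ) < 2 ^ m
    · simp only [hj, if_true]
      rw [Fintype.sum_eq_single (⟨2 * (j : ℕ), by show 2 * (j : ℕ) < 2 ^ (m + 1); omega⟩ : Fin (2 ^ (m + 2 - 1)))]
      · simp [Bfun, Ecatfun, E1fun, hi, hj, Nat.mul_div_cancel_left]
      · intro k hk
        have hk' : (k : ℕ) ≠ 2 * (j : ℕ) := fun h => hk (Fin.ext h)
        simp [Ecatfun, E1fun, hj, hk']
    · simp only [hj, if_false]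
      apply Finset.sum_eq_zero
      intro k _
      by_cases hk : (k : ℕ) = 2 * ((j : ℕ) - 2 ^ m) + 1
      · have hodd : (k : ℕ) % 2 = 1 := by omega
        simp [Bfun, hi, hodd]
      · simp [Ecatfun, E2fun, hj, hk]
  · simp only [hi, if_false]
    by_cases hj : (j : ℕ) < 2 ^ m
    · simp only [hj, if_true]
      apply Finset.sum_congr rfl
      intro k _
      simp only [Bfun, hi, if_false, Ecatfun, hm2, hj, if_true]
      rfl
    · simp only [hj, if_false]
      apply Finset.sum_congr rfl
      intro k _
      simp only [Bfun, hi, if_false, Ecatfun, hm2, hj, if_true]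
      rfl
end

section
/- For all d ≥ 3 the following congruences modulo 2 hold between vectors of elements of ℌ (all maps applied entrywise): ∂₁(L_x(w_{d−1})) ≡ A_{d−2}(L_x(w_d)) + L_{xy}(w_{d−1}) (mod 2) and ∂₁(L_{xy} L_x^{−1}(w_{d−1})) ≡ A_{d−2}(L_{xy} L_x^{−1}(w_d)) + L_{x²} L_y (L_x^{−1}(w_{d−1})) (mod 2), where a congruence mod 2 means all integer coefficients of the difference of corresponding entries are even. -/
/- ℌ = ℚ⟨x,y⟩ realized as the monoid algebra of the free monoid on two letters,
   where `false` plays the role of the letter x and `true` of the letter y. -/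
noncomputable section

/-- The `n`-th entry of `L_x⁻¹(w_d)`: the `n`-th monomial of degree `d` in
xℌy with its initial letter x removed. -/
def lxInv (d n : ℕ) : H :=
  MonoidAlgebra.single (FreeMonoid.ofList ((wordList d n).tail)) 1

namespace Aux13

/-! ### Basic vocabulary: monomials as lists, and the insertion operation -/

/-- The monomial corresponding to a word (list of letters). -/
def Sq (l : List Bool) : H := MonoidAlgebra.single (FreeMonoid.ofList l) 1

/-- Replace the `k`-th letter of `l` by the two letters `xy`. -/
def ins (l : List Bool) (k : ℕ) : List Bool := l.take k ++ [false, true] ++ l.drop (k + 1)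

lemma ins_zero (b : Bool) (l : List Bool) : ins (b :: l) 0 = false :: true :: l := by simp [ins]

lemma ins_succ (b : Bool) (l : List Bool) (k : ℕ) : ins (b :: l) (k + 1) = b :: ins l k := by
  simp [ins]

lemma Sq_mul (l₁ l₂ : List Bool) : Sq l₁ * Sq l₂ = Sq (l₁ ++ l₂) := by
  rw [Sq, Sq, Sq, MonoidAlgebra.single_mul_single, one_mul, FreeMonoid.ofList_append]

lemma Sq_cons (b : Bool) (l : List Bool) :
    MonoidAlgebra.single (FreeMonoid.of b) (1 : ℚ) * Sq l = Sq (b :: l) := by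
  rw [Sq, Sq, MonoidAlgebra.single_mul_single, one_mul, FreeMonoid.ofList_cons]

lemma X_mul (l : List Bool) : X * Sq l = Sq (false :: l) := Sq_cons false l

lemma XY : X * Y = Sq [false, true] := by
  rw [show Y = Sq [true] from rfl, X_mul]

lemma Sq_nil : Sq [] = 1 := rfl

/-! ### The derivation on monomials -/

lemma D_one (D : H →ₗ[ℚ] H) (hleib : ∀ a b : H, D (a * b) = D a * b + a * D b) :
    D 1 = 0 := by
  have h := hleib 1 1
  rw [one_mul, one_mul, mul_one] at h
  exact (add_eq_left.mp h.symm)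

lemma D_word (D : H →ₗ[ℚ] H) (hleib : ∀ a b : H, D (a * b) = D a * b + a * D b)
    (hDx : D X = X * Y) (hDy : D Y = -(X * Y)) :
    ∀ l : List Bool, D (Sq l) = ∑ k ∈ Finset.range l.length,
      (if l.getD k false then (-1 : ℚ) else 1) • Sq (ins l k) := by
  intro l
  induction l with
  | nil => simp [Sq_nil, D_one D hleib]
  | cons b l ih =>
    rw [← Sq_cons, hleib, ih, List.length_cons, Finset.sum_range_succ']
    have hd : D (MonoidAlgebra.single (FreeMonoid.of b) (1 : ℚ))
        = (if b then (-1 : ℚ) else 1) • Sq [false, true] := by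
      cases b
      · rw [show MonoidAlgebra.single (FreeMonoid.of false) (1 : ℚ) = X from rfl]
        simpa [XY] using hDx
      · rw [show MonoidAlgebra.single (FreeMonoid.of true) (1 : ℚ) = Y from rfl]
        simpa [XY] using hDy
    rw [hd, Finset.mul_sum]
    simp only [smul_mul_assoc, Sq_mul, mul_smul_comm, Sq_cons, ins_succ, List.getD_cons_succ,
      List.getD_cons_zero, ins_zero]
    rw [show ([false, true] : List Bool) ++ l = false :: true :: l from rfl]
    abel

/-! ### The tails of the canonical monomials -/

def tl (e i : ℕ) : List Bool :=
  ((List.range e).map fun k => Nat.testBit i (e - 1 - k)) ++ [true]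

lemma tl_length (e i : ℕ) : (tl e i).length = e + 1 := by simp [tl]

lemma tl_zero (i : ℕ) : tl 0 i = [true] := by simp [tl]

lemma tl_succ (e i : ℕ) : tl (e + 1) i = Nat.testBit i e :: tl e i := by
  unfold tl
  rw [List.range_succ_eq_map]
  simp only [List.map_cons, List.map_map, List.cons_append]
  congr 2
  apply List.map_congr_left
  intro k hk
  simp only [Function.comp_apply]
  congr 1
  omega

lemma tl_mod (e i : ℕ) : tl e (i % 2 ^ e) = tl e i := by
  unfold tl
  congr 1
  apply List.map_congr_left
  intro k hk
  simp only [List.mem_range] at hk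
  rw [Nat.testBit_mod_two_pow]
  simp [show e - 1 - k < e by omega]

lemma testBit_hi {e i : ℕ} (h1 : 2 ^ e ≤ i) (h2 : i < 2 ^ (e + 1)) :
    Nat.testBit i e = true := by
  have h3 : (2 : ℕ) ^ (e + 1) = 2 ^ e + 2 ^ e := by ring
  rw [Nat.testBit_eq_decide_div_mod_eq]
  have : i / 2 ^ e = 1 := Nat.div_eq_of_lt_le (by omega) (by omega)
  simp [this]

/-! ### Unfolding lemmas for the matrices `A` -/

lemma Afun_first {e i j : ℕ} (hi : i < 2 ^ e) (hj : j < 2 ^ (e + 1)) :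
    Afun (e + 1) i j = Afun e i j := by
  rw [Afun, if_pos hi, if_pos hj]

lemma Afun_lo_hi {e i j : ℕ} (hi : i < 2 ^ e) (hj : j < 2 ^ (e + 1)) :
    Afun (e + 1) i (2 ^ (e + 1) + j) = if j = i then 1 else 0 := by
  have h0 : 0 < 2 ^ e := Nat.two_pow_pos e
  rw [Afun, if_pos hi, if_neg (by omega)]
  by_cases hji : j = i
  · subst hji
    rw [if_pos (by omega), if_pos (by omega), if_pos rfl]
  · rw [if_neg hji]
    by_cases h : 2 ^ (e + 1) + j < 2 ^ (e + 1) + 2 ^ e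
    · rw [if_pos h, if_neg (by omega)]
    · rw [if_neg h]

lemma Afun_hi_lo {e i j : ℕ} (hi : 2 ^ e ≤ i) (hj : j < 2 ^ (e + 1)) :
    Afun (e + 1) i j = if j = i then 1 else 0 := by
  have h0 : 0 < 2 ^ e := Nat.two_pow_pos e
  rw [Afun, if_neg (by omega)]
  by_cases h : j < 2 ^ e
  · rw [if_pos h, if_neg (by omega)]
  · rw [if_neg h, if_pos hj]

lemma Afun_hi_hi {e i j : ℕ} (hi : 2 ^ e ≤ i) :
    Afun (e + 1) i (2 ^ (e + 1) + j) = Afun e (i - 2 ^ e) j := by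
  have h0 : 0 < 2 ^ e := Nat.two_pow_pos e
  rw [Afun, if_neg (by omega), if_neg (by omega), if_neg (by omega)]
  congr 1
  omega

/-! ### The key combinatorial identity -/

lemma claimC : ∀ e i, i < 2 ^ e → ∀ pre : List Bool,
    Sq (pre ++ true :: tl e i) + ∑ k ∈ Finset.range (e + 1), Sq (pre ++ ins (tl e i) k)
      = ∑ j ∈ Finset.range (2 ^ (e + 1)), (Afun e i j : ℚ) • Sq (pre ++ tl (e + 1) j) := by
  intro e
  induction e with
  | zero =>
    intro i hi pre
    interval_cases i
    rw [tl_zero, Finset.sum_range_one,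
      show (2 : ℕ) ^ (0 + 1) = 2 from rfl, Finset.sum_range_succ, Finset.sum_range_one,
      show ins [true] 0 = [false, true] from by simp [ins],
      show tl 1 0 = [false, true] from by rw [tl_succ, tl_zero]; norm_num,
      show tl 1 1 = [true, true] from by rw [tl_succ, tl_zero]; norm_num]
    norm_num [Afun]
    abel
  | succ e ih =>
    intro i hi pre
    have h0 : 0 < 2 ^ e := Nat.two_pow_pos e
    have h3 : (2 : ℕ) ^ (e + 1) = 2 ^ e + 2 ^ e := by ring
    rw [tl_succ]
    conv_lhs => rw [Finset.sum_range_succ']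
    conv_rhs => rw [show (2 : ℕ) ^ (e + 1 + 1) = 2 ^ (e + 1) + 2 ^ (e + 1) from by ring,
      Finset.sum_range_add]
    simp only [ins_succ, ins_zero]
    by_cases hb : i < 2 ^ e
    · rw [Nat.testBit_lt_two_pow hb]
      have IH := ih i hb (pre ++ [false])
      simp only [List.append_assoc, List.singleton_append] at IH
      have hf : ∀ j ∈ Finset.range (2 ^ (e + 1)),
          ((Afun (e + 1) i j : ℚ)) • Sq (pre ++ tl (e + 1 + 1) j)
            = ((Afun e i j : ℚ)) • Sq (pre ++ false :: tl (e + 1) j) := by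
        intro j hj
        rw [Finset.mem_range] at hj
        rw [Afun_first hb hj, tl_succ, Nat.testBit_lt_two_pow hj]
      have hs : ∀ j ∈ Finset.range (2 ^ (e + 1)),
          ((Afun (e + 1) i (2 ^ (e + 1) + j) : ℚ)) • Sq (pre ++ tl (e + 1 + 1) (2 ^ (e + 1) + j))
            = if j = i then Sq (pre ++ true :: tl (e + 1) j) else 0 := by
        intro j hj
        rw [Finset.mem_range] at hj
        rw [Afun_lo_hi hb hj, tl_succ, testBit_hi (by omega) (by omega),
          show tl (e + 1) (2 ^ (e + 1) + j) = tl (e + 1) j from by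
            rw [← tl_mod (e + 1) (2 ^ (e + 1) + j), Nat.add_mod_left, Nat.mod_eq_of_lt hj]]
        split <;> simp
      rw [Finset.sum_congr rfl hf, Finset.sum_congr rfl hs, Finset.sum_ite_eq',
        if_pos (Finset.mem_range.mpr (by omega)),
        show tl (e + 1) i = false :: tl e i from by rw [tl_succ, Nat.testBit_lt_two_pow hb],
        ← IH]
      abel
    · have hbt : Nat.testBit i e = true := testBit_hi (by omega) (by omega)
      rw [hbt]
      have hi' : i - 2 ^ e < 2 ^ e := by omega
      have hmod : i % 2 ^ e = i - 2 ^ e := by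
        rw [Nat.mod_eq_sub_mod (by omega), Nat.mod_eq_of_lt hi']
      have htl : tl e (i - 2 ^ e) = tl e i := by rw [← hmod, tl_mod]
      have IH := ih (i - 2 ^ e) hi' (pre ++ [true])
      rw [htl] at IH
      simp only [List.append_assoc, List.singleton_append] at IH
      have hf : ∀ j ∈ Finset.range (2 ^ (e + 1)),
          ((Afun (e + 1) i j : ℚ)) • Sq (pre ++ tl (e + 1 + 1) j)
            = if j = i then Sq (pre ++ false :: tl (e + 1) j) else 0 := by
        intro j hj
        rw [Finset.mem_range] at hj
        rw [Afun_hi_lo (by omega) hj, tl_succ, Nat.testBit_lt_two_pow hj]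
        split <;> simp
      have hs : ∀ j ∈ Finset.range (2 ^ (e + 1)),
          ((Afun (e + 1) i (2 ^ (e + 1) + j) : ℚ)) • Sq (pre ++ tl (e + 1 + 1) (2 ^ (e + 1) + j))
            = ((Afun e (i - 2 ^ e) j : ℚ)) • Sq (pre ++ true :: tl (e + 1) j) := by
        intro j hj
        rw [Finset.mem_range] at hj
        rw [Afun_hi_hi (by omega), tl_succ, testBit_hi (by omega) (by omega),
          show tl (e + 1) (2 ^ (e + 1) + j) = tl (e + 1) j from by
            rw [← tl_mod (e + 1) (2 ^ (e + 1) + j), Nat.add_mod_left, Nat.mod_eq_of_lt hj]]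
      rw [Finset.sum_congr rfl hf, Finset.sum_congr rfl hs, Finset.sum_ite_eq',
        if_pos (Finset.mem_range.mpr (by omega)),
        show tl (e + 1) i = true :: tl e i from by rw [tl_succ, hbt],
        ← IH]
      abel

/-! ### Evenness -/

lemma even2_two_smul (s : Finset ℕ) (z : ℕ → ℤ) (v : ℕ → List Bool) :
    Even2 ((2 : ℚ) • ∑ k ∈ s, ((z k : ℤ) : ℚ) • Sq (v k)) := by
  classical
  intro m
  refine ⟨∑ k ∈ s, if FreeMonoid.ofList (v k) = m then z k else 0, ?_⟩
  rw [MonoidAlgebra.coeff_smul_apply, MonoidAlgebra.coeff_sum, Finsupp.finset_sum_apply, smul_eq_mul]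
  congr 1
  push_cast
  refine Finset.sum_congr rfl fun k hk => ?_
  rw [MonoidAlgebra.coeff_smul_apply, Sq, smul_eq_mul]
  rw [MonoidAlgebra.coeff_single, Finsupp.single_apply]
  split <;> simp

/-! ### The two parts in unified form -/

lemma partGeneral (D : H →ₗ[ℚ] H) (hleib : ∀ a b : H, D (a * b) = D a * b + a * D b)
    (hDx : D X = X * Y) (hDy : D Y = -(X * Y)) (b : Bool) (e i : ℕ) (hi : i < 2 ^ e) :
    Even2 (D (Sq (false :: b :: tl e i))
      - (∑ j ∈ Finset.range (2 ^ (e + 1)), (Afun e i j : ℚ) • Sq (false :: b :: tl (e + 1) j))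
      - Sq (false :: (!b) :: b :: tl e i)) := by
  have hq := even2_two_smul (Finset.range (e + 1 + 1 + 1))
      (fun k => if (false :: b :: tl e i).getD k false then -1 else 0)
      (fun k => ins (false :: b :: tl e i) k)
  have key : D (Sq (false :: b :: tl e i))
      - (∑ j ∈ Finset.range (2 ^ (e + 1)), (Afun e i j : ℚ) • Sq (false :: b :: tl (e + 1) j))
      - Sq (false :: (!b) :: b :: tl e i)
      = (2 : ℚ) • ∑ k ∈ Finset.range (e + 1 + 1 + 1),
          (((if (false :: b :: tl e i).getD k false then (-1 : ℤ) else 0) : ℤ) : ℚ)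
            • Sq (ins (false :: b :: tl e i) k) := by
    rw [D_word D hleib hDx hDy,
      show (false :: b :: tl e i).length = e + 1 + 1 + 1 from by simp [tl_length]]
    have hexp : ∀ k ∈ Finset.range (e + 1 + 1 + 1),
        (if (false :: b :: tl e i).getD k false then (-1 : ℚ) else 1)
            • Sq (ins (false :: b :: tl e i) k)
          = Sq (ins (false :: b :: tl e i) k)
            + (2 : ℚ) • ((((if (false :: b :: tl e i).getD k false then (-1 : ℤ) else 0) : ℤ) : ℚ)
                • Sq (ins (false :: b :: tl e i) k)) := by
      intro k _
      by_cases h : (false :: b :: tl e i).getD k false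
      · rw [if_pos h, if_pos h]
        push_cast
        module
      · rw [if_neg h, if_neg h]
        push_cast
        module
    rw [Finset.sum_congr rfl hexp, Finset.sum_add_distrib, ← Finset.smul_sum]
    conv_lhs => rw [Finset.sum_range_succ' (fun k => Sq (ins (false :: b :: tl e i) k)),
      Finset.sum_range_succ']
    simp only [ins_succ, ins_zero]
    have hC := claimC e i hi [false, b]
    simp only [List.cons_append, List.nil_append] at hC
    rw [← hC]
    cases b <;> simp only [Bool.not_true, Bool.not_false] <;> abel
  rw [key]
  exact hq

end Aux13

open Aux13

/-- Let `D = ∂₁` be the (unique) derivation of ℌ with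
`∂₁(x) = xy` and `∂₁(y) = -xy`.  For all `d ≥ 3` the following congruences
mod 2 hold entrywise (a congruence mod 2 means all integer coefficients of
the difference are even):
`∂₁(L_x(w_{d-1})) ≡ A_{d-2}(L_x(w_d)) + L_{xy}(w_{d-1})` and
`∂₁(L_{xy} L_x⁻¹(w_{d-1})) ≡ A_{d-2}(L_{xy} L_x⁻¹(w_d)) + L_{x²} L_y (L_x⁻¹(w_{d-1}))`. -/
theorem statement13 (D : H →ₗ[ℚ] H)
    (hleib : ∀ a b : H, D (a * b) = D a * b + a * D b)
    (hDx : D X = X * Y) (hDy : D Y = -(X * Y))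
    (d : ℕ) (hd : 3 ≤ d) (i : Fin (2 ^ (d - 3))) :
    Even2 (D (X * wVec (d - 1) i)
        - (∑ j : Fin (2 ^ (d - 2)), ((Afun (d - 3) (i : ℕ) (j : ℕ) : ℚ)) • (X * wVec d j))
        - X * Y * wVec (d - 1) i)
    ∧ Even2 (D (X * Y * lxInv (d - 1) (i : ℕ))
        - (∑ j : Fin (2 ^ (d - 2)),
            ((Afun (d - 3) (i : ℕ) (j : ℕ) : ℚ)) • (X * Y * lxInv d (j : ℕ)))
        - X * X * (Y * lxInv (d - 1) (i : ℕ))) := by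
  obtain ⟨e, rfl⟩ : ∃ e, d = e + 3 := ⟨d - 3, by omega⟩
  have hi : (i : ℕ) < 2 ^ e := i.isLt
  constructor
  · -- part 1
    have h1 : X * wVec (e + 2) i = Sq (false :: false :: tl e (i : ℕ)) := by
      rw [show wVec (e + 2) i = Sq (false :: tl e (i : ℕ)) from rfl, X_mul]
    have h3 : X * Y * wVec (e + 2) i = Sq (false :: true :: false :: tl e (i : ℕ)) := by
      rw [show wVec (e + 2) i = Sq (false :: tl e (i : ℕ)) from rfl, XY, Sq_mul]
      rfl
    have hsum : (∑ j : Fin (2 ^ (e + 1)), ((Afun e (i : ℕ) (j : ℕ) : ℚ)) • (X * wVec (e + 3) j))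
        = ∑ j ∈ Finset.range (2 ^ (e + 1)),
            (Afun e (i : ℕ) j : ℚ) • Sq (false :: false :: tl (e + 1) j) := by
      refine (Fin.sum_univ_eq_sum_range
        (fun n => (Afun e (i : ℕ) n : ℚ) • (X * Sq (false :: tl (e + 1) n)))
        (2 ^ (e + 1))).trans ?_
      exact Finset.sum_congr rfl fun j _ => by rw [X_mul]
    have hp := partGeneral D hleib hDx hDy false e (i : ℕ) hi
    show Even2 (D (X * wVec (e + 2) i)
      - (∑ j : Fin (2 ^ (e + 1)), ((Afun e (i : ℕ) (j : ℕ) : ℚ)) • (X * wVec (e + 3) j))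
      - X * Y * wVec (e + 2) i)
    rw [h1, h3, hsum]
    exact hp
  · -- part 2
    have h1 : X * Y * lxInv (e + 2) (i : ℕ) = Sq (false :: true :: tl e (i : ℕ)) := by
      rw [show lxInv (e + 2) (i : ℕ) = Sq (tl e (i : ℕ)) from rfl, XY, Sq_mul]
      rfl
    have h3 : X * X * (Y * lxInv (e + 2) (i : ℕ))
        = Sq (false :: false :: true :: tl e (i : ℕ)) := by
      rw [show lxInv (e + 2) (i : ℕ) = Sq (tl e (i : ℕ)) from rfl,
        show Y = MonoidAlgebra.single (FreeMonoid.of true) (1 : ℚ) from rfl, Sq_cons,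
        show X * X = Sq [false, false] from by rw [show X = Sq [false] from rfl, Sq_mul]; rfl,
        Sq_mul]
      rfl
    have hsum : (∑ j : Fin (2 ^ (e + 1)),
          ((Afun e (i : ℕ) (j : ℕ) : ℚ)) • (X * Y * lxInv (e + 3) (j : ℕ)))
        = ∑ j ∈ Finset.range (2 ^ (e + 1)),
            (Afun e (i : ℕ) j : ℚ) • Sq (false :: true :: tl (e + 1) j) := by
      refine (Fin.sum_univ_eq_sum_range
        (fun n => (Afun e (i : ℕ) n : ℚ) • (X * Y * lxInv (e + 3) n))
        (2 ^ (e + 1))).trans ?_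
      refine Finset.sum_congr rfl fun j _ => ?_
      rw [show lxInv (e + 3) j = Sq (tl (e + 1) j) from rfl, XY, Sq_mul]
      rfl
    have hp := partGeneral D hleib hDx hDy true e (i : ℕ) hi
    show Even2 (D (X * Y * lxInv (e + 2) (i : ℕ))
      - (∑ j : Fin (2 ^ (e + 1)),
          ((Afun e (i : ℕ) (j : ℕ) : ℚ)) • (X * Y * lxInv (e + 3) (j : ℕ)))
      - X * X * (Y * lxInv (e + 2) (i : ℕ)))
    rw [h1, h3, hsum]
    exact hp

end
end
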